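/- Let μ > 0, σ > 0, γ > 1, and λ ∈ [0, μ). Suppose the discriminant D := (γ−1)(μ²−λ²)/(γσ⁴) − (1/2 − μ/σ²)² is strictly positive, set a = √D and b = 1/2 − μ/σ² + (γ−1)(μ−λ)/(γσ²). Then the function w(y) = ( a·tan( arctan(b/a) + a·y ) + (μ/σ² − 1/2) ) / (γ−1) satisfies, for every y ∈ ℝ with arctan(b/a) + a·y ∈ (−π/2, π/2), the Riccati equation w'(y) + (1−γ)·w(y)² + (2μ/σ² − 1)·w(y) − (μ²−λ²)/(γσ⁴) = 0, together with the initial condition w(0) = (μ−λ)/(γσ²). -/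

import Mathlib

/-- The tangent formula solves the Riccati ODE
`w' + (1-γ)w² + (2μ/σ² - 1)w - (μ²-λ²)/(γσ⁴) = 0` with `w 0 = (μ-λ)/(γσ²)`,
in the case of positive discriminant (`γ > 1`), on the domain where
`arctan (b/a) + a·y ∈ (-π/2, π/2)`. -/
theorem riccati_tan_solution
    (μ σ γ lam : ℝ) (hμ : 0 < μ) (hσ : 0 < σ) (hγ : 1 < γ)
    (hlam : lam ∈ Set.Ico 0 μ)
    (hD : 0 < (γ - 1) * (μ ^ 2 - lam ^ 2) / (γ * σ ^ 4) - (1 / 2 - μ / σ ^ 2) ^ 2)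
    (a b : ℝ)
    (ha : a = Real.sqrt
      ((γ - 1) * (μ ^ 2 - lam ^ 2) / (γ * σ ^ 4) - (1 / 2 - μ / σ ^ 2) ^ 2))
    (hb : b = 1 / 2 - μ / σ ^ 2 + (γ - 1) * (μ - lam) / (γ * σ ^ 2))
    (w : ℝ → ℝ)
    (hw : w = fun y : ℝ =>
      (a * Real.tan (Real.arctan (b / a) + a * y) + (μ / σ ^ 2 - 1 / 2)) / (γ - 1)) :
    (∀ y : ℝ,
      Real.arctan (b / a) + a * y ∈ Set.Ioo (-(Real.pi / 2)) (Real.pi / 2) →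
      deriv w y + (1 - γ) * (w y) ^ 2 + (2 * μ / σ ^ 2 - 1) * w y
        - (μ ^ 2 - lam ^ 2) / (γ * σ ^ 4) = 0) ∧
    w 0 = (μ - lam) / (γ * σ ^ 2) := by
  have hγ1 : γ - 1 ≠ 0 := by linarith
  have ha2 : a ^ 2 = (γ - 1) * (μ ^ 2 - lam ^ 2) / (γ * σ ^ 4) - (1 / 2 - μ / σ ^ 2) ^ 2 := by
    rw [ha, Real.sq_sqrt hD.le]
  have hapos : 0 < a := by
    rw [ha]; exact Real.sqrt_pos.mpr hD
  constructor
  · intro y hy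
    have hcos : Real.cos (Real.arctan (b / a) + a * y) ≠ 0 :=
      (Real.cos_pos_of_mem_Ioo hy).ne'
    set θ := Real.arctan (b / a) + a * y with hθ
    have hderiv : HasDerivAt w ((a * (1 / Real.cos θ ^ 2) * a) / (γ - 1)) y := by
      have h1 : HasDerivAt (fun y : ℝ => Real.arctan (b / a) + a * y) a y := by
        simpa using ((hasDerivAt_id y).const_mul a).const_add (Real.arctan (b / a))
      have h2 : HasDerivAt (fun y : ℝ => Real.tan (Real.arctan (b / a) + a * y))
          ((1 / Real.cos θ ^ 2) * a) y :=
        by exact (Real.hasDerivAt_tan hcos).comp y h1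
      rw [hw]
      exact ((h2.const_mul a).add_const (μ / σ ^ 2 - 1 / 2)).div_const (γ - 1)
        |>.congr_deriv (by ring)
    rw [hderiv.deriv, hw]
    simp only
    rw [← hθ]
    have htan : 1 / Real.cos θ ^ 2 = 1 + Real.tan θ ^ 2 := by
      rw [one_div, ← Real.inv_one_add_tan_sq hcos, inv_inv]
    rw [htan]
    have hσ2 : (σ:ℝ) ^ 2 ≠ 0 := by positivity
    have hγ0 : γ ≠ 0 := by linarith
    have key : a ^ 2 + (μ / σ ^ 2 - 1 / 2) ^ 2 = (γ - 1) * ((μ ^ 2 - lam ^ 2) / (γ * σ ^ 4)) := by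
      rw [ha2]; field_simp; ring
    have hK : (μ ^ 2 - lam ^ 2) / (γ * σ ^ 4)
        = (a ^ 2 + (μ / σ ^ 2 - 1 / 2) ^ 2) / (γ - 1) := by
      rw [key, mul_div_cancel_left₀ _ hγ1]
    rw [hK]
    field_simp
    ring
  · rw [hw]
    simp only [mul_zero, add_zero, Real.tan_arctan]
    rw [mul_div_cancel₀ _ (ne_of_gt hapos), hb]
    have hσ2 : (σ:ℝ) ^ 2 ≠ 0 := by positivity
    have hγ0 : γ ≠ 0 := by linarith
    field_simp
    ring
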